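/- Let C be a locally presentable category with a cofibrantly generated weak factorization system (L, R) such that ∅ → X lies in L for every object X, equipped with an exact cylinder I and a class An(I) of right I-anodyne extensions. Then a right I-fibration p : X → Y with right I-fibrant codomain Y is a weak equivalence (i.e., induces bijections p* : [Y, W]_I → [X, W]_I for all right I-fibrant W) if and only if it lies in the class R. -/

import Mathlib

set_option linter.unusedSectionVars false

open CategoryTheory CategoryTheory.Limits

universe v u

namespace Paper

variable {C : Type u} [Category.{v} C]

/-- The class of morphisms having the left lifting property against every morphism in `T`. -/
def llp (T : MorphismProperty C) : MorphismProperty C :=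
  fun _ _ f => ∀ ⦃X Y : C⦄ (g : X ⟶ Y), T g → HasLiftingProperty f g

/-- The class of morphisms having the right lifting property against every morphism in `T`. -/
def rlp (T : MorphismProperty C) : MorphismProperty C :=
  fun _ _ g => ∀ ⦃A B : C⦄ (f : A ⟶ B), T f → HasLiftingProperty f g

/-- The morphism property associated to a set of arrows. -/
def ofArrows (S : Set (Arrow C)) : MorphismProperty C :=
  fun _ _ f => Arrow.mk f ∈ S

/-- A (possibly large) category `J` is `κ`-filtered if every diagram in `J` indexed by a
small category of size `< κ` admits a cocone. -/
def IsCardinalFiltered (J : Cat.{v, v}) (κ : Cardinal.{v}) : Prop :=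
  ∀ K : Cat.{v, v}, Cardinal.mk (Arrow K) < κ → ∀ F : K ⥤ J, Nonempty (Cocone F)

/-- An object `X` is `κ`-presentable if `Hom(X, -)` preserves colimits of `κ`-filtered
diagrams. -/
def IsPresentableObj (κ : Cardinal.{v}) (X : C) : Prop :=
  ∀ J : Cat.{v, v}, IsCardinalFiltered J κ →
    PreservesColimitsOfShape J (coyoneda.obj (Opposite.op X))

/-- A category is locally presentable if it is cocomplete and there is a regular cardinal `κ`
and a small family of `κ`-presentable objects such that every object is a `κ`-filtered colimit
of objects of the family. -/
class LocallyPresentable (C : Type u) [Category.{v} C] extends HasColimits C : Prop where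
  exists_presentable_generator :
    ∃ κ : Cardinal.{v}, κ.IsRegular ∧
      ∃ (ι : Type v) (G : ι → C), (∀ i, IsPresentableObj κ (G i)) ∧
        ∀ X : C, ∃ (J : Cat.{v, v}) (F : J ⥤ C) (c : Cocone F),
          IsCardinalFiltered J κ ∧ Nonempty (IsColimit c) ∧
          (∀ j : J, ∃ i, Nonempty (F.obj j ≅ G i)) ∧ Nonempty (c.pt ≅ X)

/-- `(L, R)` is a cofibrantly generated weak factorization system such that every morphism
from the initial object is in `L`. -/
structure IsCofGenWFS [HasColimits C] (L R : MorphismProperty C) : Prop where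
  exists_generating_set : ∃ S : Set (Arrow C), Small.{v} S ∧ L = llp (rlp (ofArrows S))
  rlp_eq : R = rlp L
  factorization : ∀ ⦃X Y : C⦄ (f : X ⟶ Y),
    ∃ (Z : C) (i : X ⟶ Z) (p : Z ⟶ Y), L i ∧ R p ∧ i ≫ p = f
  initial_mem : ∀ X : C, L (initial.to X)

/-- A functorial cylinder on `C`. -/
structure Cylinder (C : Type u) [Category.{v} C] where
  I : C ⥤ C
  d0 : 𝟭 C ⟶ I
  d1 : 𝟭 C ⟶ I
  σ : I ⟶ 𝟭 C
  d0_σ : ∀ X : C, d0.app X ≫ σ.app X = 𝟙 X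
  d1_σ : ∀ X : C, d1.app X ≫ σ.app X = 𝟙 X

namespace Cylinder

variable (E : Cylinder C)

lemma d0_naturality' {K M : C} (f : K ⟶ M) :
    f ≫ E.d0.app M = E.d0.app K ≫ E.I.map f := by
  simpa using E.d0.naturality f

lemma d1_naturality' {K M : C} (f : K ⟶ M) :
    f ≫ E.d1.app M = E.d1.app K ≫ E.I.map f := by
  simpa using E.d1.naturality f

variable [HasColimits C]

/-- The canonical map `X ⊔ X ⟶ I(X)`. -/
noncomputable def ι (X : C) : X ⨿ X ⟶ E.I.obj X :=
  coprod.desc (E.d0.app X) (E.d1.app X)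

lemma ι_naturality {K M : C} (f : K ⟶ M) :
    coprod.map f f ≫ E.ι M = E.ι K ≫ E.I.map f := by
  have h0 := E.d0.naturality f
  have h1 := E.d1.naturality f
  simp only [Functor.id_map] at h0 h1
  apply coprod.hom_ext <;> simp [ι, h0, h1]

/-- The pushout-corner map `∂I ⊠ f : (M ⊔ M) ⊔_{K ⊔ K} I(K) ⟶ I(M)`. -/
noncomputable def boundaryBox {K M : C} (f : K ⟶ M) :
    pushout (coprod.map f f) (E.ι K) ⟶ E.I.obj M :=
  pushout.desc (E.ι M) (E.I.map f) (E.ι_naturality f)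

/-- The pushout-corner map `∂0 ⊠ f : M ⊔_K I(K) ⟶ I(M)`. -/
noncomputable def box0 {K M : C} (f : K ⟶ M) :
    pushout f (E.d0.app K) ⟶ E.I.obj M :=
  pushout.desc (E.d0.app M) (E.I.map f) (E.d0_naturality' f)

/-- The pushout-corner map `∂1 ⊠ f : M ⊔_K I(K) ⟶ I(M)`. -/
noncomputable def box1 {K M : C} (f : K ⟶ M) :
    pushout f (E.d1.app K) ⟶ E.I.obj M :=
  pushout.desc (E.d1.app M) (E.I.map f) (E.d1_naturality' f)

end Cylinder

/-- A cylinder is exact with respect to the class `L` if it preserves small colimits,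
the maps `X ⊔ X ⟶ I(X)` are in `L`, and the pushout-corner maps of morphisms of `L` are
again in `L`. -/
structure IsExactCylinder [HasColimits C] (E : Cylinder C) (L : MorphismProperty C) : Prop where
  preservesColimits : PreservesColimits E.I
  ι_mem : ∀ X : C, L (E.ι X)
  boundaryBox_mem : ∀ ⦃K M : C⦄ (f : K ⟶ M), L f → L (E.boundaryBox f)
  box0_mem : ∀ ⦃K M : C⦄ (f : K ⟶ M), L f → L (E.box0 f)
  box1_mem : ∀ ⦃K M : C⦄ (f : K ⟶ M), L f → L (E.box1 f)

/-- `An` is a class of right `I`-anodyne extensions. -/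
structure IsRightAnodyneClass [HasColimits C] (E : Cylinder C) (L : MorphismProperty C)
    (An : MorphismProperty C) : Prop where
  le : An ≤ L
  exists_generating_set : ∃ Λ : Set (Arrow C), Small.{v} Λ ∧ ofArrows Λ ≤ L ∧
    An = llp (rlp (ofArrows Λ))
  box1_mem : ∀ ⦃K M : C⦄ (f : K ⟶ M), L f → An (E.box1 f)
  boundaryBox_mem : ∀ ⦃K M : C⦄ (f : K ⟶ M), An f → An (E.boundaryBox f)

/-- `An` is a class of left `I`-anodyne extensions. -/
structure IsLeftAnodyneClass [HasColimits C] (E : Cylinder C) (L : MorphismProperty C)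
    (An : MorphismProperty C) : Prop where
  le : An ≤ L
  exists_generating_set : ∃ Λ : Set (Arrow C), Small.{v} Λ ∧ ofArrows Λ ≤ L ∧
    An = llp (rlp (ofArrows Λ))
  box0_mem : ∀ ⦃K M : C⦄ (f : K ⟶ M), L f → An (E.box0 f)
  boundaryBox_mem : ∀ ⦃K M : C⦄ (f : K ⟶ M), An f → An (E.boundaryBox f)

/-- A morphism is an `An`-fibration if it has the right lifting property against all
morphisms of `An`. -/
def IsFib (An : MorphismProperty C) {X Y : C} (p : X ⟶ Y) : Prop :=
  ∀ ⦃A B : C⦄ (f : A ⟶ B), An f → HasLiftingProperty f p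

/-- An object `W` is `An`-fibrant if the map `W ⟶ *` has the right lifting property against
all morphisms of `An`, i.e. every morphism to `W` extends along every morphism of `An`. -/
def IsFibrantObj (An : MorphismProperty C) (W : C) : Prop :=
  ∀ ⦃A B : C⦄ (f : A ⟶ B), An f → ∀ a : A ⟶ W, ∃ b : B ⟶ W, f ≫ b = a

namespace Cylinder

variable (E : Cylinder C)

/-- An `I`-homotopy from `f` to `g`. -/
def Homotopy {X Y : C} (f g : X ⟶ Y) : Prop :=
  ∃ h : E.I.obj X ⟶ Y, E.d0.app X ≫ h = f ∧ E.d1.app X ≫ h = g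

/-- `[X, Y]_I`, the quotient of `Hom(X, Y)` by the equivalence relation generated by
`I`-homotopy. -/
def HoHom (X Y : C) : Type v :=
  Quot (fun f g : X ⟶ Y => E.Homotopy f g)

/-- Precomposition `f^* : [B, W]_I ⟶ [A, W]_I`. -/
def precompQ {A B : C} (f : A ⟶ B) (W : C) : E.HoHom B W → E.HoHom A W :=
  Quot.lift (fun g => Quot.mk _ (f ≫ g)) (by
    rintro g g' ⟨h, h0, h1⟩
    apply Quot.sound
    refine ⟨E.I.map f ≫ h, ?_, ?_⟩
    · rw [← Category.assoc, ← E.d0_naturality' f, Category.assoc, h0]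
    · rw [← Category.assoc, ← E.d1_naturality' f, Category.assoc, h1])

end Cylinder

/-- `f` is a weak equivalence if it induces bijections `[B, W]_I ≅ [A, W]_I` for all
fibrant `W`. -/
def IsWeakEq (E : Cylinder C) (An : MorphismProperty C) {A B : C} (f : A ⟶ B) : Prop :=
  ∀ W : C, IsFibrantObj An W → Function.Bijective (E.precompQ f W)

/-- `f` is a retract of `f'`. -/
def IsRetractOf {X Y X' Y' : C} (f : X ⟶ Y) (f' : X' ⟶ Y') : Prop :=
  ∃ (i : X ⟶ X') (r : X' ⟶ X) (j : Y ⟶ Y') (s : Y' ⟶ Y),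
    i ≫ r = 𝟙 X ∧ j ≫ s = 𝟙 Y ∧ i ≫ f' = f ≫ j ∧ f' ≫ s = r ≫ f

/-- A model structure on a category: the classes of weak equivalences, cofibrations and
fibrations, subject to the two-out-of-three, retract, lifting and factorization axioms. -/
structure ModelStructure (C : Type u) [Category.{v} C] where
  weq : MorphismProperty C
  cof : MorphismProperty C
  fib : MorphismProperty C
  weq_id : ∀ X : C, weq (𝟙 X)
  weq_comp : ∀ ⦃X Y Z : C⦄ (f : X ⟶ Y) (g : Y ⟶ Z), weq f → weq g → weq (f ≫ g)
  weq_cancel_left : ∀ ⦃X Y Z : C⦄ (f : X ⟶ Y) (g : Y ⟶ Z), weq f → weq (f ≫ g) → weq g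
  weq_cancel_right : ∀ ⦃X Y Z : C⦄ (f : X ⟶ Y) (g : Y ⟶ Z), weq g → weq (f ≫ g) → weq f
  weq_retract : ∀ ⦃X Y X' Y' : C⦄ (f : X ⟶ Y) (f' : X' ⟶ Y'),
    IsRetractOf f f' → weq f' → weq f
  cof_retract : ∀ ⦃X Y X' Y' : C⦄ (f : X ⟶ Y) (f' : X' ⟶ Y'),
    IsRetractOf f f' → cof f' → cof f
  fib_retract : ∀ ⦃X Y X' Y' : C⦄ (f : X ⟶ Y) (f' : X' ⟶ Y'),
    IsRetractOf f f' → fib f' → fib f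
  lift_trivCof_fib : ∀ ⦃A B X Y : C⦄ (i : A ⟶ B) (p : X ⟶ Y),
    cof i → weq i → fib p → HasLiftingProperty i p
  lift_cof_trivFib : ∀ ⦃A B X Y : C⦄ (i : A ⟶ B) (p : X ⟶ Y),
    cof i → fib p → weq p → HasLiftingProperty i p
  fact_cof_trivFib : ∀ ⦃X Y : C⦄ (f : X ⟶ Y),
    ∃ (Z : C) (i : X ⟶ Z) (p : Z ⟶ Y), cof i ∧ fib p ∧ weq p ∧ i ≫ p = f
  fact_trivCof_fib : ∀ ⦃X Y : C⦄ (f : X ⟶ Y),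
    ∃ (Z : C) (i : X ⟶ Z) (p : Z ⟶ Y), cof i ∧ weq i ∧ fib p ∧ i ≫ p = f

/-- An object `W` is fibrant for a model structure if every morphism to `W` extends along
every trivial cofibration, i.e. `W ⟶ *` has the right lifting property against trivial
cofibrations. -/
def ModelStructure.Fibrant (M : ModelStructure C) (W : C) : Prop :=
  ∀ ⦃A B : C⦄ (i : A ⟶ B), M.cof i → M.weq i → ∀ a : A ⟶ W, ∃ b : B ⟶ W, i ≫ b = a


section Aux

variable [HasColimits C]

namespace Cylinder

variable (E : Cylinder C)

lemma σ_naturality' {K M : C} (f : K ⟶ M) :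
    E.I.map f ≫ E.σ.app M = E.σ.app K ≫ f :=
  (E.σ.naturality f).trans (by simp)

lemma d0_σ_assoc {X T : C} (w : X ⟶ T) : E.d0.app X ≫ E.σ.app X ≫ w = w := by
  rw [← Category.assoc, E.d0_σ]; simp

lemma d1_σ_assoc {X T : C} (w : X ⟶ T) : E.d1.app X ≫ E.σ.app X ≫ w = w := by
  rw [← Category.assoc, E.d1_σ]; simp

lemma d0_naturality_assoc {K M T : C} (f : K ⟶ M) (w : E.I.obj M ⟶ T) :
    f ≫ E.d0.app M ≫ w = E.d0.app K ≫ E.I.map f ≫ w := by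
  rw [← Category.assoc, E.d0_naturality' f, Category.assoc]

lemma d1_naturality_assoc {K M T : C} (f : K ⟶ M) (w : E.I.obj M ⟶ T) :
    f ≫ E.d1.app M ≫ w = E.d1.app K ≫ E.I.map f ≫ w := by
  rw [← Category.assoc, E.d1_naturality' f, Category.assoc]

lemma σ_naturality_assoc {K M T : C} (f : K ⟶ M) (w : M ⟶ T) :
    E.I.map f ≫ E.σ.app M ≫ w = E.σ.app K ≫ f ≫ w := by
  rw [← Category.assoc, E.σ_naturality' f, Category.assoc]

lemma inl_ι (Z : C) : (coprod.inl : Z ⟶ Z ⨿ Z) ≫ E.ι Z = E.d0.app Z := by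
  simp [Cylinder.ι]; exact coprod.inl_desc _ _

lemma inr_ι (Z : C) : (coprod.inr : Z ⟶ Z ⨿ Z) ≫ E.ι Z = E.d1.app Z := by
  simp [Cylinder.ι]; exact coprod.inr_desc _ _

lemma inl_box1 {K M : C} (f : K ⟶ M) :
    pushout.inl f (E.d1.app K) ≫ E.box1 f = E.d1.app M := pushout.inl_desc _ _ _

lemma inr_box1 {K M : C} (f : K ⟶ M) :
    pushout.inr f (E.d1.app K) ≫ E.box1 f = E.I.map f := pushout.inr_desc _ _ _

lemma inl_box1_assoc {K M T : C} (f : K ⟶ M) (w : E.I.obj M ⟶ T) :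
    pushout.inl f (E.d1.app K) ≫ E.box1 f ≫ w = E.d1.app M ≫ w := by
  rw [← Category.assoc, E.inl_box1]

lemma inr_box1_assoc {K M T : C} (f : K ⟶ M) (w : E.I.obj M ⟶ T) :
    pushout.inr f (E.d1.app K) ≫ E.box1 f ≫ w = E.I.map f ≫ w := by
  rw [← Category.assoc, E.inr_box1]

lemma precompQ_mk {A B W : C} (f : A ⟶ B) (g : B ⟶ W) :
    E.precompQ f W (Quot.mk _ g) = Quot.mk _ (f ≫ g) := rfl

section PairDesc

variable [PreservesColimits E.I]

/-- Descent of a pair of maps along the canonical coproduct structure of `I (Z ⨿ Z)`. -/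
noncomputable def pairDesc {Z T : C} (β0 β1 : E.I.obj Z ⟶ T) : E.I.obj (Z ⨿ Z) ⟶ T :=
  inv (coprodComparison E.I Z Z) ≫ coprod.desc β0 β1

lemma inl_pairDesc {Z T : C} (β0 β1 : E.I.obj Z ⟶ T) :
    E.I.map coprod.inl ≫ E.pairDesc β0 β1 = β0 := by
  have h : E.I.map (coprod.inl : Z ⟶ Z ⨿ Z) = coprod.inl ≫ coprodComparison E.I Z Z := by
    simp [coprodComparison]; exact (coprod.inl_desc _ _).symm
  rw [pairDesc, h, Category.assoc, IsIso.hom_inv_id_assoc, coprod.inl_desc]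

lemma inr_pairDesc {Z T : C} (β0 β1 : E.I.obj Z ⟶ T) :
    E.I.map coprod.inr ≫ E.pairDesc β0 β1 = β1 := by
  have h : E.I.map (coprod.inr : Z ⟶ Z ⨿ Z) = coprod.inr ≫ coprodComparison E.I Z Z := by
    simp [coprodComparison]; exact (coprod.inr_desc _ _).symm
  rw [pairDesc, h, Category.assoc, IsIso.hom_inv_id_assoc, coprod.inr_desc]

lemma I_coprod_hom_ext {Z T : C} {φ ψ : E.I.obj (Z ⨿ Z) ⟶ T}
    (h0 : E.I.map coprod.inl ≫ φ = E.I.map coprod.inl ≫ ψ)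
    (h1 : E.I.map coprod.inr ≫ φ = E.I.map coprod.inr ≫ ψ) : φ = ψ := by
  rw [← cancel_epi (coprodComparison E.I Z Z)]
  apply coprod.hom_ext
  · simp [coprodComparison]; exact (coprod.inl_desc _ _).trans (h0.trans (coprod.inl_desc _ _).symm)
  · simp [coprodComparison]; exact (coprod.inr_desc _ _).trans (h1.trans (coprod.inr_desc _ _).symm)

lemma ι_comp_eq {Z T : C} (α β0 β1 : E.I.obj Z ⟶ T)
    (h0 : E.d0.app Z ≫ α = E.d1.app Z ≫ β0)
    (h1 : E.d1.app Z ≫ α = E.d1.app Z ≫ β1) :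
    E.ι Z ≫ α = E.d1.app (Z ⨿ Z) ≫ E.pairDesc β0 β1 := by
  apply coprod.hom_ext
  · rw [← Category.assoc, ← Category.assoc, inl_ι, h0,
      E.d1_naturality' (coprod.inl : Z ⟶ Z ⨿ Z), Category.assoc, inl_pairDesc]
  · rw [← Category.assoc, ← Category.assoc, inr_ι, h1,
      E.d1_naturality' (coprod.inr : Z ⟶ Z ⨿ Z), Category.assoc, inr_pairDesc]

lemma lift_restrict {Z T : C} (α β0 β1 : E.I.obj Z ⟶ T)
    (h0 : E.d0.app Z ≫ α = E.d1.app Z ≫ β0)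
    (h1 : E.d1.app Z ≫ α = E.d1.app Z ≫ β1)
    (H : E.I.obj (E.I.obj Z) ⟶ T)
    (hH : E.box1 (E.ι Z) ≫ H =
      pushout.desc α (E.pairDesc β0 β1) (E.ι_comp_eq α β0 β1 h0 h1)) :
    E.d0.app Z ≫ E.d0.app (E.I.obj Z) ≫ H = E.d0.app Z ≫ β0 ∧
      E.d1.app Z ≫ E.d0.app (E.I.obj Z) ≫ H = E.d0.app Z ≫ β1 := by
  have hIι : E.I.map (E.ι Z) ≫ H = E.pairDesc β0 β1 := by
    rw [← E.inr_box1 (E.ι Z), Category.assoc, hH, pushout.inr_desc]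
  have hb0 : E.I.map (E.d0.app Z) ≫ H = β0 := by
    rw [← E.inl_ι Z, E.I.map_comp, Category.assoc, hIι, inl_pairDesc]
  have hb1 : E.I.map (E.d1.app Z) ≫ H = β1 := by
    rw [← E.inr_ι Z, E.I.map_comp, Category.assoc, hIι, inr_pairDesc]
  constructor
  · rw [← Category.assoc, E.d0_naturality' (E.d0.app Z), Category.assoc, hb0]; rfl
  · rw [← Category.assoc, E.d0_naturality' (E.d1.app Z), Category.assoc, hb1]; rfl

end PairDesc

variable {L An : MorphismProperty C}

/-- Filling a "box" in a fibrant object. -/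
lemma fill_fibrant (hE : IsExactCylinder E L) (hAn : IsRightAnodyneClass E L An)
    {Z W : C} (hWf : IsFibrantObj An W) (α β0 β1 : E.I.obj Z ⟶ W)
    (h0 : E.d0.app Z ≫ α = E.d1.app Z ≫ β0)
    (h1 : E.d1.app Z ≫ α = E.d1.app Z ≫ β1) :
    ∃ k : E.I.obj Z ⟶ W,
      E.d0.app Z ≫ k = E.d0.app Z ≫ β0 ∧ E.d1.app Z ≫ k = E.d0.app Z ≫ β1 := by
  haveI := hE.preservesColimits
  obtain ⟨H, hH⟩ := hWf (E.box1 (E.ι Z)) (hAn.box1_mem _ (hE.ι_mem Z))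
    (pushout.desc α (E.pairDesc β0 β1) (E.ι_comp_eq α β0 β1 h0 h1))
  exact ⟨E.d0.app (E.I.obj Z) ≫ H, E.lift_restrict α β0 β1 h0 h1 H hH⟩

/-- Filling a "box" along a fibration, with control of the image. -/
lemma fill_fib (hE : IsExactCylinder E L) (hAn : IsRightAnodyneClass E L An)
    {Z X Y : C} (p : X ⟶ Y) (hp : IsFib An p)
    (α β0 β1 : E.I.obj Z ⟶ X) (v : E.I.obj (E.I.obj Z) ⟶ Y)
    (h0 : E.d0.app Z ≫ α = E.d1.app Z ≫ β0)
    (h1 : E.d1.app Z ≫ α = E.d1.app Z ≫ β1)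
    (hvα : α ≫ p = E.d1.app (E.I.obj Z) ≫ v)
    (hv0 : β0 ≫ p = E.I.map (E.d0.app Z) ≫ v)
    (hv1 : β1 ≫ p = E.I.map (E.d1.app Z) ≫ v) :
    ∃ k : E.I.obj Z ⟶ X,
      E.d0.app Z ≫ k = E.d0.app Z ≫ β0 ∧ E.d1.app Z ≫ k = E.d0.app Z ≫ β1 ∧
        k ≫ p = E.d0.app (E.I.obj Z) ≫ v := by
  haveI := hE.preservesColimits
  haveI := hp _ (hAn.box1_mem _ (hE.ι_mem Z))
  have sq : CommSq (pushout.desc α (E.pairDesc β0 β1) (E.ι_comp_eq α β0 β1 h0 h1))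
      (E.box1 (E.ι Z)) p v := by
    constructor
    apply pushout.hom_ext
    · rw [← Category.assoc, ← Category.assoc, pushout.inl_desc, E.inl_box1, hvα]
    · rw [← Category.assoc, ← Category.assoc, pushout.inr_desc, E.inr_box1]
      apply E.I_coprod_hom_ext
      · rw [← Category.assoc, inl_pairDesc, hv0, ← Category.assoc, ← E.I.map_comp, inl_ι]
      · rw [← Category.assoc, inr_pairDesc, hv1, ← Category.assoc, ← E.I.map_comp, inr_ι]
  obtain ⟨e0, e1⟩ := E.lift_restrict α β0 β1 h0 h1 sq.lift sq.fac_left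
  exact ⟨E.d0.app (E.I.obj Z) ≫ sq.lift, e0, e1, by rw [Category.assoc, sq.fac_right]⟩

/-- For a fibrant target, `I`-homotopy is an equivalence relation. -/
lemma homotopy_equivalence (hE : IsExactCylinder E L) (hAn : IsRightAnodyneClass E L An)
    {W : C} (hWf : IsFibrantObj An W) (Z : C) :
    Equivalence (fun f g : Z ⟶ W => E.Homotopy f g) := by
  constructor
  · intro f
    exact ⟨E.σ.app Z ≫ f, E.d0_σ_assoc f, E.d1_σ_assoc f⟩
  · rintro f g ⟨h, e0, e1⟩
    obtain ⟨k, k0, k1⟩ := E.fill_fibrant hE hAn hWf (E.σ.app Z ≫ g) (E.σ.app Z ≫ g) h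
      (by rw [E.d0_σ_assoc, E.d1_σ_assoc])
      (by rw [E.d1_σ_assoc, e1])
    exact ⟨k, by rw [k0, E.d0_σ_assoc], by rw [k1, e0]⟩
  · rintro f g e ⟨h, a0, a1⟩ ⟨h', b0, b1⟩
    obtain ⟨k, k0, k1⟩ := E.fill_fibrant hE hAn hWf h' h (E.σ.app Z ≫ e)
      (by rw [b0, a1])
      (by rw [b1, E.d1_σ_assoc])
    exact ⟨k, by rw [k0, a0], by rw [k1, E.d0_σ_assoc]⟩

lemma hoHom_mk_eq_iff (hE : IsExactCylinder E L) (hAn : IsRightAnodyneClass E L An)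
    {Z W : C} (hWf : IsFibrantObj An W) {f g : Z ⟶ W} :
    (Quot.mk _ f : E.HoHom Z W) = Quot.mk _ g ↔ E.Homotopy f g := by
  rw [Quot.eq]
  exact (E.homotopy_equivalence hE hAn hWf Z).eqvGen_iff

lemma d1_app_bot_isIso (hE : IsExactCylinder E L) : IsIso (E.d1.app (⊥_ C)) := by
  haveI := hE.preservesColimits
  let c : Cocone (Functor.empty.{v} C) :=
    { pt := ⊥_ C
      ι := { app := fun j => j.as.elim, naturality := fun {j} _ _ => j.as.elim } }
  have hc : IsColimit c :=
    { desc := fun s => initial.to s.pt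
      fac := fun s j => j.as.elim
      uniq := fun s m _ => initial.hom_ext _ _ }
  have hc2 := isColimitOfPreserves E.I hc
  exact ⟨E.σ.app (⊥_ C), E.d1_σ _, hc2.hom_ext (fun j => j.as.elim)⟩

/-- The morphism `∂1 : M → I M` is a right anodyne extension. -/
lemma d1_app_mem (hE : IsExactCylinder E L) (hAn : IsRightAnodyneClass E L An)
    (hinit : ∀ X : C, L (initial.to X)) (M : C) : An (E.d1.app M) := by
  haveI : IsIso (E.d1.app (⊥_ C)) := E.d1_app_bot_isIso hE
  have hbox := hAn.box1_mem (initial.to M) (hinit M)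
  have heq : E.d1.app M =
      pushout.inl (initial.to M) (E.d1.app (⊥_ C)) ≫ E.box1 (initial.to M) :=
    (pushout.inl_desc _ _ _).symm
  haveI : IsIso (pushout.inl (initial.to M) (E.d1.app (⊥_ C))) := by
    refine ⟨pushout.desc (𝟙 M) (inv (E.d1.app (⊥_ C)) ≫ initial.to M)
      (initial.hom_ext _ _), pushout.inl_desc _ _ _, ?_⟩
    apply pushout.hom_ext
    · rw [← Category.assoc, pushout.inl_desc, Category.id_comp, Category.comp_id]
    · rw [← Category.assoc, pushout.inr_desc, Category.comp_id, Category.assoc,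
        pushout.condition, IsIso.inv_hom_id_assoc]
  obtain ⟨Λ, -, -, hAnEq⟩ := hAn.exists_generating_set
  rw [hAnEq] at hbox ⊢
  intro A B g hg
  haveI := hbox g hg
  rw [heq]
  infer_instance

end Cylinder

lemma isFibrantObj_of_isFib {An : MorphismProperty C} {X Y : C} (p : X ⟶ Y)
    (hp : IsFib An p) (hY : IsFibrantObj An Y) : IsFibrantObj An X := by
  intro A B f hf a
  obtain ⟨b, hb⟩ := hY f hf (a ≫ p)
  haveI := hp f hf
  have sq : CommSq a f p b := ⟨hb.symm⟩
  exact ⟨sq.lift, sq.fac_left⟩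

end Aux


/-- Proposition 2.25 (rfibtriv): a right `I`-fibration with right `I`-fibrant codomain is a
weak equivalence iff it is in `R`. -/
theorem statement_7    {C : Type u} [Category.{v} C] [LocallyPresentable C]
    (L R : MorphismProperty C) (hW : IsCofGenWFS L R)
    (E : Cylinder C) (hE : IsExactCylinder E L)
    (An : MorphismProperty C) (hAn : IsRightAnodyneClass E L An)
    ⦃X Y : C⦄ (p : X ⟶ Y) (hp : IsFib An p) (hY : IsFibrantObj An Y) :
    IsWeakEq E An p ↔ R p := by
  constructor
  · -- weak equivalence → trivial fibration
    intro hweq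
    have hX : IsFibrantObj An X := isFibrantObj_of_isFib p hp hY
    -- a homotopy retraction `s` of `p`
    obtain ⟨q, hq⟩ := (hweq X hX).2 (Quot.mk _ (𝟙 X))
    obtain ⟨s, rfl⟩ := Quot.exists_rep q
    rw [E.precompQ_mk] at hq
    have hps : E.Homotopy (p ≫ s) (𝟙 X) := (E.hoHom_mk_eq_iff hE hAn hX).1 hq
    -- `𝟙 Y` is homotopic to `s ≫ p`
    have h2 : (Quot.mk _ (𝟙 Y) : E.HoHom Y Y) = Quot.mk _ (s ≫ p) := by
      apply (hweq Y hY).1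
      rw [E.precompQ_mk, E.precompQ_mk, Category.comp_id]
      refine (E.hoHom_mk_eq_iff hE hAn hY).2 ?_
      refine (E.homotopy_equivalence hE hAn hY X).symm ?_
      obtain ⟨G1, e0, e1⟩ := hps
      exact ⟨G1 ≫ p, by rw [← Category.assoc, e0, Category.assoc],
        by rw [← Category.assoc, e1]; simp⟩
    obtain ⟨kh, k0, k1⟩ := (E.hoHom_mk_eq_iff hE hAn hY).1 h2
    -- replace `s` by a genuine section `t` of `p`
    haveI := hp _ (E.d1_app_mem hE hAn hW.initial_mem Y)
    have sq1 : CommSq s (E.d1.app Y) p kh := ⟨k1.symm⟩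
    have htp : (E.d0.app Y ≫ sq1.lift) ≫ p = 𝟙 Y := by
      rw [Category.assoc, sq1.fac_right, k0]
    set t := E.d0.app Y ≫ sq1.lift with ht
    have htp' : ∀ {T : C} (w : Y ⟶ T), t ≫ p ≫ w = w := by
      intro T w; rw [← Category.assoc, htp]; simp
    -- a homotopy `G : 𝟙 X ~ p ≫ t`
    have hpt : E.Homotopy (p ≫ t) (p ≫ s) := by
      refine ⟨E.I.map p ≫ sq1.lift, ?_, ?_⟩
      · rw [← Category.assoc, ← E.d0_naturality' p, Category.assoc, ← ht]
      · rw [← Category.assoc, ← E.d1_naturality' p, Category.assoc, sq1.fac_left]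
    obtain ⟨G, G0, G1⟩ : E.Homotopy (𝟙 X) (p ≫ t) :=
      (E.homotopy_equivalence hE hAn hX X).symm
        ((E.homotopy_equivalence hE hAn hX X).trans hpt hps)
    have G0' : ∀ {T : C} (w : X ⟶ T), E.d0.app X ≫ G ≫ w = w := by
      intro T w; rw [← Category.assoc, G0]; simp
    have G1' : ∀ {T : C} (w : X ⟶ T), E.d1.app X ≫ G ≫ w = p ≫ t ≫ w := by
      intro T w; rw [← Category.assoc, G1, Category.assoc]
    -- improve `G` to a fibrewise homotopy `G'`
    obtain ⟨G', e0, e1, efib⟩ := E.fill_fib hE hAn p hp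
      (E.σ.app X ≫ p ≫ t) G (G ≫ p ≫ t) (E.I.map (E.σ.app X) ≫ G ≫ p)
      (by rw [E.d0_σ_assoc, G1])
      (by rw [E.d1_σ_assoc, G1', htp'])
      (by simp only [Category.assoc]
          rw [← E.d1_naturality_assoc]
          simp only [Functor.id_obj]
          rw [G1'])
      (by rw [← Functor.map_comp_assoc, E.d0_σ]; simp)
      (by simp only [Category.assoc]
          rw [htp, Category.comp_id, ← Functor.map_comp_assoc, E.d1_σ]
          simp)
    have e0' : E.d0.app X ≫ G' = 𝟙 X := by rw [e0, G0]
    have e1' : E.d1.app X ≫ G' = p ≫ t := by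
      rw [e1, G0']
    have efib' : G' ≫ p = E.σ.app X ≫ p := by
      rw [efib, ← E.d0_naturality_assoc]
      simp only [Functor.id_obj]
      rw [G0']
    -- now prove the right lifting property against `L`
    rw [hW.rlp_eq]
    intro A B i hi
    haveI := hp _ (hAn.box1_mem i hi)
    constructor
    intro f g sq
    have hcomm : i ≫ g ≫ t = E.d1.app A ≫ E.I.map f ≫ G' := by
      rw [← E.d1_naturality_assoc, e1', ← Category.assoc, ← sq.w, Category.assoc]
    have sq2 : CommSq (pushout.desc (g ≫ t) (E.I.map f ≫ G') hcomm) (E.box1 i) p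
        (E.σ.app B ≫ g) := by
      constructor
      apply pushout.hom_ext
      · rw [pushout.inl_desc_assoc, E.inl_box1_assoc, Category.assoc, htp,
          Category.comp_id, E.d1_σ_assoc]
      · rw [pushout.inr_desc_assoc, E.inr_box1_assoc, Category.assoc, efib',
          E.σ_naturality_assoc, E.σ_naturality_assoc, sq.w]
    have hl : E.I.map i ≫ sq2.lift = E.I.map f ≫ G' := by
      rw [← E.inr_box1 i, Category.assoc, sq2.fac_left, pushout.inr_desc]
    refine ⟨⟨⟨E.d0.app B ≫ sq2.lift, ?_, ?_⟩⟩⟩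
    · rw [E.d0_naturality_assoc, hl, ← E.d0_naturality_assoc, e0', Category.comp_id]
    · rw [Category.assoc, sq2.fac_right, E.d0_σ_assoc]
  · -- trivial fibration → weak equivalence
    intro hR
    rw [hW.rlp_eq] at hR
    haveI := hR (initial.to Y) (hW.initial_mem Y)
    have sq : CommSq (initial.to X) (initial.to Y) p (𝟙 Y) := ⟨initial.hom_ext _ _⟩
    have hsp : sq.lift ≫ p = 𝟙 Y := sq.fac_right
    haveI := hR (E.ι X) (hE.ι_mem X)
    have sq2 : CommSq (coprod.desc (𝟙 X) (p ≫ sq.lift)) (E.ι X) p (E.σ.app X ≫ p) := by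
      constructor
      apply coprod.hom_ext
      · rw [← Category.assoc, coprod.inl_desc, Category.id_comp, ← Category.assoc,
          E.inl_ι, E.d0_σ_assoc]
      · rw [← Category.assoc, coprod.inr_desc, Category.assoc, hsp, Category.comp_id,
          ← Category.assoc, E.inr_ι, E.d1_σ_assoc]
    have h0 : E.d0.app X ≫ sq2.lift = 𝟙 X := by
      rw [← E.inl_ι, Category.assoc, sq2.fac_left, coprod.inl_desc]
    have h1 : E.d1.app X ≫ sq2.lift = p ≫ sq.lift := by
      rw [← E.inr_ι, Category.assoc, sq2.fac_left, coprod.inr_desc]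
    intro W hWf
    rw [Function.bijective_iff_has_inverse]
    refine ⟨E.precompQ sq.lift W, ?_, ?_⟩
    · intro q
      obtain ⟨g0, rfl⟩ := Quot.exists_rep q
      rw [E.precompQ_mk, E.precompQ_mk, ← Category.assoc, hsp, Category.id_comp]
    · intro q
      obtain ⟨f0, rfl⟩ := Quot.exists_rep q
      rw [E.precompQ_mk, E.precompQ_mk]
      exact (Quot.sound ⟨sq2.lift ≫ f0, by rw [← Category.assoc, h0]; simp,
        by rw [← Category.assoc, h1, Category.assoc]⟩).symm

end Paper
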